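/- In any pLTS, if a relation R on the set of states is consistent, then R is contained in bisimilarity: R ⊆ ∼. -/

import Mathlib

open scoped ENNReal

noncomputable section

/-- A probabilistic labelled transition system (pLTS): states `S`, alphabet `A`,
and a transition relation into probability distributions (`PMF`s) on `S`. -/
structure PLTS (S : Type) (A : Type) where
  Tr : S → A → PMF S → Prop

namespace PLTS

variable {S A : Type}

/-- The mass that a distribution assigns to a set of states. -/
def mass (d : PMF S) (E : Set S) : ℝ≥0∞ := ∑' s : E, d s

/-- Two distributions are `r`-equivalent if they assign equal mass to every
`r`-equivalence class (for an equivalence `r`, the classes are the sets `{t | r s t}`). -/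
def REquiv (r : S → S → Prop) (d d' : PMF S) : Prop :=
  ∀ s : S, mass d {t | r s t} = mass d' {t | r s t}

/-- An equivalence relation is a bisimulation if related states can match
each other's transitions with `r`-equivalent target distributions. -/
def IsBisimulation (L : PLTS S A) (r : S → S → Prop) : Prop :=
  Equivalence r ∧
    ∀ s t, r s t → ∀ a d, L.Tr s a d → ∃ d', L.Tr t a d' ∧ REquiv r d d'

/-- Bisimilarity: the union of all bisimulation relations. -/
def Bisim (L : PLTS S A) (s t : S) : Prop :=
  ∃ r, L.IsBisimulation r ∧ r s t

/-- The bisimulation approximants `∼ₙ`. -/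
def approx (L : PLTS S A) : ℕ → S → S → Prop
  | 0 => fun _ _ => True
  | n + 1 => fun s t =>
      (∀ a d, L.Tr s a d → ∃ d', L.Tr t a d' ∧ REquiv (L.approx n) d d') ∧
      (∀ a d', L.Tr t a d' → ∃ d, L.Tr s a d ∧ REquiv (L.approx n) d d')

/-- A pLTS is finitely branching if every state has finitely many transitions. -/
def FinBranching (L : PLTS S A) : Prop :=
  ∀ s, {p : A × PMF S | L.Tr s p.1 p.2}.Finite

/-- One-step successor relation: `s → s'` iff some transition of `s` gives `s'`
positive probability. -/
def Step (L : PLTS S A) (s s' : S) : Prop :=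
  ∃ a d, L.Tr s a d ∧ d s' ≠ 0

end PLTS

namespace PLTS

variable {S A : Type}

/-- The pair `(s, t)` is consistent with respect to a relation `R`:
each transition of `s` is matched by one of `t` (and vice versa) with target
distributions equivalent w.r.t. the least equivalence relation containing
`{(s', t') | s → s', t → t', R s' t'}`. -/
def ConsistentPair (L : PLTS S A) (R : S → S → Prop) (s t : S) : Prop :=
  (∀ a d, L.Tr s a d → ∃ d', L.Tr t a d' ∧
      REquiv (Relation.EqvGen fun x y => L.Step s x ∧ L.Step t y ∧ R x y) d d') ∧
  (∀ a d', L.Tr t a d' → ∃ d, L.Tr s a d ∧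
      REquiv (Relation.EqvGen fun x y => L.Step s x ∧ L.Step t y ∧ R x y) d d')

/-- A relation `R` is consistent if every pair in `R` is consistent w.r.t. `R`. -/
def Consistent (L : PLTS S A) (R : S → S → Prop) : Prop :=
  ∀ s t, R s t → L.ConsistentPair R s t

end PLTS


lemma requiv_mono {S : Type} {e e' : S → S → Prop} (he : Equivalence e)
    (he' : Equivalence e') (hle : ∀ x y, e x y → e' x y) {d d' : PMF S}
    (h : PLTS.REquiv e d d') : PLTS.REquiv e' d d' := by
  classical
  intro s
  letI se : Setoid S := ⟨e, he⟩
  have hset : ∀ c : Quotient se, {x | Quotient.mk se x = c} = {t | e (Quotient.out c) t} := by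
    intro c
    ext x
    simp only [Set.mem_setOf_eq]
    constructor
    · intro hx
      exact he.symm (Quotient.exact (hx.trans (Quotient.out_eq c).symm))
    · intro hx
      exact (Quotient.sound (he.symm hx)).trans (Quotient.out_eq c)
  have main : ∀ p : PMF S, PLTS.mass p {t | e' s t} =
      ∑' c : Quotient se,
        (if e' s (Quotient.out c) then PLTS.mass p {t | e (Quotient.out c) t} else 0) := by
    intro p
    rw [PLTS.mass, tsum_subtype,
      ← (Equiv.sigmaFiberEquiv (Quotient.mk se)).tsum_eq, ENNReal.tsum_sigma']
    apply tsum_congr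
    intro c
    by_cases hc : e' s (Quotient.out c)
    · rw [if_pos hc, PLTS.mass]
      have h1 : ∀ b : {x // Quotient.mk se x = c},
          Set.indicator {t | e' s t} (fun x => p x) ((Equiv.sigmaFiberEquiv (Quotient.mk se)) ⟨c, b⟩) = p b := by
        intro b
        have hb : e (Quotient.out c) b.1 := Set.ext_iff.mp (hset c) b.1 |>.mp b.2
        exact Set.indicator_of_mem (he'.trans hc (hle _ _ hb)) _
      rw [tsum_congr h1]
      have : {t | e (Quotient.out c) t} = {x | Quotient.mk se x = c} := (hset c).symm
      rw [this]
      rfl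
    · rw [if_neg hc]
      refine (tsum_congr fun b => ?_).trans tsum_zero
      have hb : e (Quotient.out c) b.1 := Set.ext_iff.mp (hset c) b.1 |>.mp b.2
      apply Set.indicator_of_notMem
      intro hmem
      exact hc (he'.trans hmem (he'.symm (hle _ _ hb)))
  rw [main d, main d']
  apply tsum_congr
  intro c
  by_cases hc : e' s (Quotient.out c)
  · rw [if_pos hc, if_pos hc, h (Quotient.out c)]
  · rw [if_neg hc, if_neg hc]

theorem consistent_subset_bisim_aux {S A : Type} (L : PLTS S A)
    (R : S → S → Prop) (hR : L.Consistent R) :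
    ∀ s t, Relation.EqvGen R s t →
      (∀ a d, L.Tr s a d → ∃ d', L.Tr t a d' ∧ PLTS.REquiv (Relation.EqvGen R) d d') ∧
      (∀ a d', L.Tr t a d' → ∃ d, L.Tr s a d ∧ PLTS.REquiv (Relation.EqvGen R) d' d) := by
  intro s t h
  induction h with
  | rel x y hxy =>
    obtain ⟨h1, h2⟩ := hR x y hxy
    have hmono : ∀ {d d' : PMF S},
        PLTS.REquiv (Relation.EqvGen fun u v => L.Step x u ∧ L.Step y v ∧ R u v) d d' →
        PLTS.REquiv (Relation.EqvGen R) d d' := fun he =>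
      requiv_mono (Relation.EqvGen.is_equivalence _) (Relation.EqvGen.is_equivalence R)
        (fun u v huv => Relation.EqvGen.mono (r := fun u v => L.Step x u ∧ L.Step y v ∧ R u v) (p := R) (fun a b hab => hab.2.2) u v huv) he
    constructor
    · intro a d hd
      obtain ⟨d', hd', he⟩ := h1 a d hd
      exact ⟨d', hd', hmono he⟩
    · intro a d' hd'
      obtain ⟨d, hd, he⟩ := h2 a d' hd'
      exact ⟨d, hd, fun u => (hmono he u).symm⟩
  | refl x =>
    exact ⟨fun a d hd => ⟨d, hd, fun u => rfl⟩, fun a d hd => ⟨d, hd, fun u => rfl⟩⟩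
  | symm x y hxy ih => exact ⟨ih.2, ih.1⟩
  | trans x y z hxy hyz ih1 ih2 =>
    constructor
    · intro a d hd
      obtain ⟨d', hd', he1⟩ := ih1.1 a d hd
      obtain ⟨d'', hd'', he2⟩ := ih2.1 a d' hd'
      exact ⟨d'', hd'', fun u => (he1 u).trans (he2 u)⟩
    · intro a d hd
      obtain ⟨d', hd', he1⟩ := ih2.2 a d hd
      obtain ⟨d'', hd'', he2⟩ := ih1.2 a d' hd'
      exact ⟨d'', hd'', fun u => (he1 u).trans (he2 u)⟩

/-- In any pLTS, every consistent relation is contained in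
bisimilarity. -/
theorem consistent_subset_bisim (S A : Type) [Countable S] (L : PLTS S A)
    (R : S → S → Prop) (hR : L.Consistent R) :
    ∀ s t, R s t → L.Bisim s t := by
  intro s t hst
  refine ⟨Relation.EqvGen R, ⟨Relation.EqvGen.is_equivalence R, ?_⟩,
    Relation.EqvGen.rel _ _ hst⟩
  intro s' t' h a d hd
  exact (consistent_subset_bisim_aux L R hR s' t' h).1 a d hd
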